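/- Let n = 2k+1 and H a maximal intersecting family of k-subsets of [n]. For any x ∈ [n], with A = H \ K_x, J = K_x \ H, and G = N(A) the upper shadow of A in (k+1)-subsets of [n]\{x}, we have G = J^c := {[n] \ T : T ∈ J}. In particular, for any subfamily X of the k-subsets of [n], |X ∩ A| - |X ∩ J| = |X ∩ H| - |X ∩ K_x|. -/

import Mathlib

/-- Let `n = 2k+1` and `H` a maximal intersecting family of `k`-subsets of `[n]`. For any
`x`, with `A = H \ K_x`, `J = K_x \ H` and `G = N(A)` the upper shadow of `A` in the
`(k+1)`-subsets of `[n]\{x}`, we have `G = Jᶜ := {[n]\T : T ∈ J}`; in particular, for any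
family `X` of `k`-subsets of `[n]`, `|X∩A| - |X∩J| = |X∩H| - |X∩K_x|`. -/
theorem stmt_11 (k n : ℕ) (hk : 0 < k) (hn : n = 2 * k + 1)
    (H : Finset (Finset (Fin n))) (hH : ∀ s ∈ H, s.card = k)
    (hint : ∀ s ∈ H, ∀ t ∈ H, (s ∩ t).Nonempty)
    (hmax : ∀ C : Finset (Fin n), C.card = k → (∀ s ∈ H, (C ∩ s).Nonempty) → C ∈ H)
    (x : Fin n) (X : Finset (Finset (Fin n))) (hX : ∀ s ∈ X, s.card = k) :
    let Kx : Finset (Finset (Fin n)) :=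
      (Finset.powersetCard k (Finset.univ : Finset (Fin n))).filter (fun s => x ∈ s)
    let A : Finset (Finset (Fin n)) := H.filter (fun s => x ∉ s)
    let J : Finset (Finset (Fin n)) := Kx \ H
    let G : Finset (Finset (Fin n)) :=
      (Finset.powersetCard (k + 1) (Finset.univ : Finset (Fin n))).filter
        (fun y => x ∉ y ∧ ∃ a ∈ A, a ⊆ y)
    G = J.image (fun T => Tᶜ) ∧
      ((X ∩ A).card : ℤ) - (X ∩ J).card = ((X ∩ H).card : ℤ) - (X ∩ Kx).card := by
  intro Kx A J G
  have hcompl : ∀ s : Finset (Fin n), sᶜ.card = n - s.card := by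
    intro s; rw [Finset.card_compl, Fintype.card_fin]
  constructor
  · ext y
    simp only [G, J, Kx, A, Finset.mem_image, Finset.mem_filter, Finset.mem_sdiff,
      Finset.mem_powersetCard_univ]
    constructor
    · rintro ⟨hyc, hxy, a, ⟨haH, hxa⟩, hay⟩
      refine ⟨yᶜ, ⟨⟨?_, ?_⟩, ?_⟩, ?_⟩
      · rw [hcompl, hyc]; omega
      · simpa using hxy
      · intro hTH
        obtain ⟨z, hz⟩ := hint yᶜ hTH a haH
        simp only [Finset.mem_inter, Finset.mem_compl] at hz
        exact hz.1 (hay hz.2)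
      · simp
    · rintro ⟨T, ⟨⟨hTk, hxT⟩, hTH⟩, rfl⟩
      have hex : ¬ ∀ s ∈ H, (T ∩ s).Nonempty := fun h => hTH (hmax T hTk h)
      push_neg at hex
      obtain ⟨s, hsH, hs⟩ := hex
      have hsub : s ⊆ Tᶜ := by
        intro z hz
        simp only [Finset.mem_compl]
        intro hzT
        exact absurd (Finset.mem_inter.mpr ⟨hzT, hz⟩) (by simp [hs])
      refine ⟨?_, ?_, s, ⟨hsH, ?_⟩, hsub⟩
      · rw [hcompl, hTk]; omega
      · simp [hxT]
      · intro hxs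
        exact absurd (hsub hxs) (by simp [hxT])
  · have h1 : X ∩ A = (X ∩ H).filter (fun s => x ∉ s) := by
      ext s
      simp only [A, Finset.mem_inter, Finset.mem_filter]
      tauto
    have h2 : X ∩ J = (X ∩ Kx).filter (fun s => s ∉ H) := by
      ext s
      simp only [J, Finset.mem_inter, Finset.mem_sdiff, Finset.mem_filter]
      tauto
    have h3 : (X ∩ H).filter (fun s => x ∈ s) = (X ∩ Kx).filter (fun s => s ∈ H) := by
      ext s
      simp only [Kx, Finset.mem_filter, Finset.mem_inter, Finset.mem_powersetCard_univ]
      constructor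
      · rintro ⟨⟨hsX, hsH⟩, hxs⟩
        exact ⟨⟨hsX, hX s hsX, hxs⟩, hsH⟩
      · tauto
    have e1 : (X ∩ A).card + ((X ∩ H).filter (fun s => x ∈ s)).card = (X ∩ H).card := by
      rw [h1, add_comm]
      exact Finset.card_filter_add_card_filter_not (fun s => x ∈ s)
    have e2 : (X ∩ J).card + ((X ∩ H).filter (fun s => x ∈ s)).card = (X ∩ Kx).card := by
      rw [h2, h3, add_comm]
      exact Finset.card_filter_add_card_filter_not (fun s => s ∈ H)
    omega
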